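/- Let 1 < p < 5. Suppose there exists ω₀ > 0 such that m_{ω₀} < 2π·m_{ω₀,ℝ}. Then for every ω > ω₀ one also has m_ω < 2π·m_{ω,ℝ}. -/

import Mathlib

open MeasureTheory Real Complex
open scoped ComplexConjugate

noncomputable section

instance : Fact (0 < 2 * Real.pi) := ⟨by positivity⟩

/-- The circle `𝕋 = ℝ/2πℤ` of circumference `2π`. -/
abbrev Torus : Type := AddCircle (2 * Real.pi)

/-- The cylinder `ℝ × 𝕋`. -/
abbrev Cyl : Type := ℝ × Torus

/-- The line soliton `R_ω(x) = ((p+1)ω/2)^{1/(p-1)} · sech^{2/(p-1)}((p-1)√ω·x/2)`. -/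
def Rsol (p ω : ℝ) (x : ℝ) : ℝ :=
  ((p + 1) * ω / 2) ^ (1 / (p - 1)) *
    Real.cosh ((p - 1) * Real.sqrt ω / 2 * x) ^ (-(2 / (p - 1)))

/-- The critical frequency `ω_p = 4/((p-1)(p+3))`. -/
def omegaCrit (p : ℝ) : ℝ := 4 / ((p - 1) * (p + 3))

/-- The line soliton viewed as a `y`-independent complex function on the cylinder. -/
def Rcyl (p ω : ℝ) : Cyl → ℂ := fun z => (Rsol p ω z.1 : ℂ)

/-- `n`-th Fourier coefficient in the periodic variable: `u_n(x)`. -/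
def fCoef (u : Cyl → ℂ) (n : ℤ) (x : ℝ) : ℂ := fourierCoeff (fun y => u (x, y)) n

/-- Partial derivative in the `x` variable. -/
def dX (u : Cyl → ℂ) (z : Cyl) : ℂ := deriv (fun t => u (t, z.2)) z.1

/-- The quadratic form `∫ |D_y|u·ū dxdy = ‖|D_y|^{1/2}u‖²_{L²(ℝ×𝕋)}`, computed via the
Fourier expansion in `y` by Parseval: `2π Σ_n |n| ∫ |u_n(x)|² dx`. -/
def DyForm (u : Cyl → ℂ) : ℝ :=
  (2 * Real.pi) * ∑' n : ℤ, (|n| : ℝ) * ∫ x : ℝ, ‖fCoef u n x‖ ^ 2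

/-- The real bilinear pairing `Re ∫ |D_y|u · v̄ dxdy`. -/
def DyPair (u v : Cyl → ℂ) : ℝ :=
  (2 * Real.pi) * ∑' n : ℤ, (|n| : ℝ) * (∫ x : ℝ, fCoef u n x * conj (fCoef v n x)).re

/-- Membership in the energy space `X = H¹_xL²_y ∩ L²_xH^{1/2}_y(ℝ×𝕋)`. -/
structure MemX (u : Cyl → ℂ) : Prop where
  memL2 : MemLp u 2 volume
  diffX : ∀ y : Torus, Differentiable ℝ fun t => u (t, y)
  dX_memL2 : MemLp (dX u) 2 volume
  dy_summable : Summable fun n : ℤ => (|n| : ℝ) * ∫ x : ℝ, ‖fCoef u n x‖ ^ 2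

/-- The squared `X`-norm `‖u‖_X² = ∫(|∂_x u|² + |D_y|u·ū + |u|²)`. -/
def Xnorm2 (u : Cyl → ℂ) : ℝ :=
  (∫ z : Cyl, ‖dX u z‖ ^ 2) + DyForm u + ∫ z : Cyl, ‖u z‖ ^ 2

/-- The action functional `S_ω`. -/
def Sfun (p ω : ℝ) (u : Cyl → ℂ) : ℝ :=
  (1 / 2) * (∫ z : Cyl, ‖dX u z‖ ^ 2) + (1 / 2) * DyForm u
    + (ω / 2) * (∫ z : Cyl, ‖u z‖ ^ 2) - (1 / (p + 1)) * ∫ z : Cyl, ‖u z‖ ^ (p + 1)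

/-- The Nehari functional `N_ω`. -/
def Nfun (p ω : ℝ) (u : Cyl → ℂ) : ℝ :=
  (∫ z : Cyl, ‖dX u z‖ ^ 2) + DyForm u + ω * (∫ z : Cyl, ‖u z‖ ^ 2)
    - ∫ z : Cyl, ‖u z‖ ^ (p + 1)

/-- The minimal action `m_ω = inf{S_ω(u) : u ∈ X\{0}, N_ω(u) = 0}`. -/
def mval (p ω : ℝ) : ℝ :=
  sInf (Sfun p ω '' {u : Cyl → ℂ | MemX u ∧ ¬ u =ᵐ[volume] (0 : Cyl → ℂ) ∧ Nfun p ω u = 0})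

/-- A ground state: a minimizer of the action on the Nehari manifold. -/
def IsGroundState (p ω : ℝ) (Q : Cyl → ℂ) : Prop :=
  MemX Q ∧ ¬ Q =ᵐ[volume] (0 : Cyl → ℂ) ∧ Nfun p ω Q = 0 ∧ Sfun p ω Q = mval p ω

/-- Weak (variational) solution of `-∂_xx Q + |D_y|Q + ωQ - |Q|^{p-1}Q = 0` on `ℝ×𝕋`. -/
def IsWeakSolution (p ω : ℝ) (Q : Cyl → ℂ) : Prop :=
  MemX Q ∧ ∀ v : Cyl → ℂ, MemX v →
    (∫ z : Cyl, dX Q z * conj (dX v z)).re + DyPair Q v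
      + ω * (∫ z : Cyl, Q z * conj (v z)).re
      - (∫ z : Cyl, ((‖Q z‖ ^ (p - 1) : ℝ) : ℂ) * Q z * conj (v z)).re = 0

/-- The one-dimensional action `S_{ω,ℝ}`. -/
def SfunR (p ω : ℝ) (u : ℝ → ℝ) : ℝ :=
  (1 / 2) * (∫ x : ℝ, (deriv u x ^ 2 + ω * u x ^ 2))
    - (1 / (p + 1)) * ∫ x : ℝ, |u x| ^ (p + 1)

/-- The one-dimensional minimal action `m_{ω,ℝ} = S_{ω,ℝ}(R_ω)`. -/
def mR (p ω : ℝ) : ℝ := SfunR p ω (Rsol p ω)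

namespace SubcritAux

open MeasureTheory

lemma smul_prod_meas {α β : Type*} [MeasurableSpace α] [MeasurableSpace β]
    (c : ENNReal) (μ : Measure α) (μ' : Measure β) [SFinite μ'] :
    (c • μ).prod μ' = c • (μ.prod μ') := by
  ext s hs
  rw [Measure.smul_apply, Measure.prod_apply hs, Measure.prod_apply hs,
    lintegral_smul_measure, smul_eq_mul]

/-- The dilation `(x,y) ↦ (ν x, y)` of the cylinder as a measurable equivalence. -/
def dilEquiv {ν : ℝ} (hν : ν ≠ 0) : Cyl ≃ᵐ Cyl :=
  MeasurableEquiv.prodCongr (Homeomorph.mulLeft₀ ν hν).toMeasurableEquiv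
    (MeasurableEquiv.refl Torus)

lemma map_dil {ν : ℝ} (hν : ν ≠ 0) :
    Measure.map (dilEquiv hν) (volume : Measure Cyl) = ENNReal.ofReal |ν⁻¹| • volume := by
  have h1 : (volume : Measure Cyl) = (volume : Measure ℝ).prod (volume : Measure Torus) :=
    MeasureTheory.Measure.volume_eq_prod ℝ Torus
  have h2 : ⇑(dilEquiv hν) = Prod.map (fun x : ℝ => ν * x) (id : Torus → Torus) := rfl
  rw [h1, h2, ← Measure.map_prod_map _ _ (measurable_const_mul ν) measurable_id,
    Real.map_volume_mul_left hν, Measure.map_id, smul_prod_meas]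

lemma integral_dil {E : Type*} [NormedAddCommGroup E] [NormedSpace ℝ E]
    {ν : ℝ} (hν : 0 < ν) (g : Cyl → E) :
    (∫ z : Cyl, g (ν * z.1, z.2)) = ν⁻¹ • ∫ z : Cyl, g z := by
  have he := (dilEquiv hν.ne').measurableEmbedding
  have h2 := he.integral_map (μ := (volume : Measure Cyl)) (g := g)
  rw [map_dil hν.ne', integral_smul_measure,
    ENNReal.toReal_ofReal (abs_nonneg _), abs_of_pos (inv_pos.2 hν)] at h2
  exact h2.symm

lemma memLp_dil {ν : ℝ} (hν : 0 < ν) (q : ENNReal) (u : Cyl → ℂ) (hu : MemLp u q volume) :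
    MemLp (fun z : Cyl => u (ν * z.1, z.2)) q volume := by
  have h := hu.smul_measure (c := ENNReal.ofReal |ν⁻¹|) ENNReal.ofReal_ne_top
  rw [← map_dil hν.ne'] at h
  exact ((dilEquiv hν.ne').measurableEmbedding.memLp_map_measure_iff).1 h

end SubcritAux

namespace SubcritAux

lemma DyForm_nonneg (u : Cyl → ℂ) : 0 ≤ DyForm u :=
  mul_nonneg (by positivity)
    (tsum_nonneg fun n => mul_nonneg (by positivity)
      (integral_nonneg fun x => by positivity))

lemma Sfun_eq_Nfun (p ω : ℝ) (u : Cyl → ℂ) :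
    Sfun p ω u = (1/2) * Nfun p ω u
      + (1/2 - 1/(p+1)) * ∫ z : Cyl, ‖u z‖ ^ (p+1) := by
  unfold Sfun Nfun; ring

lemma kappa_nonneg {p : ℝ} (hp : 1 < p) : 0 ≤ 1/2 - 1/(p+1) := by
  have h1 : (0:ℝ) < p + 1 := by linarith
  rw [sub_nonneg, div_le_div_iff₀ h1 (by norm_num)]
  linarith

lemma norm_sq_integral_pos {u : Cyl → ℂ} (hu : MemLp u 2 volume)
    (hne : ¬ u =ᵐ[volume] (0 : Cyl → ℂ)) : 0 < ∫ z : Cyl, ‖u z‖ ^ 2 := by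
  have hint : Integrable (fun z : Cyl => ‖u z‖ ^ 2) volume := by
    have h := hu.integrable_norm_rpow (by norm_num) (by norm_num)
    have h2 : ∀ a : ℝ, 0 ≤ a → a ^ ((2:ENNReal)).toReal = a ^ 2 := by
      intro a ha
      rw [ENNReal.toReal_ofNat]
      rw [show ((2:ℝ)) = ((2:ℕ):ℝ) by norm_num, Real.rpow_natCast]
    refine h.congr (Filter.Eventually.of_forall fun z => ?_)
    exact h2 _ (norm_nonneg _)
  have h0 : 0 ≤ ∫ z : Cyl, ‖u z‖ ^ 2 := integral_nonneg fun z => by positivity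
  rcases h0.lt_or_eq with h | h
  · exact h
  · exfalso
    apply hne
    have hz := (integral_eq_zero_iff_of_nonneg (fun z => by positivity) hint).1 h.symm
    filter_upwards [hz] with z hzz
    have : ‖u z‖ ^ 2 = 0 := hzz
    have : ‖u z‖ = 0 := by nlinarith [norm_nonneg (u z), _root_.sq_abs (‖u z‖)]
    simpa using this
  -- done

lemma ne_zero_of_integral_pos {v : Cyl → ℂ} (h : 0 < ∫ z : Cyl, ‖v z‖ ^ 2) :
    ¬ v =ᵐ[volume] (0 : Cyl → ℂ) := by
  intro hv
  have h0 : (fun z : Cyl => ‖v z‖ ^ 2) =ᵐ[volume] (fun _ => (0:ℝ)) := by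
    filter_upwards [hv] with z hz
    simp [hz]
  rw [integral_congr_ae h0, integral_zero] at h
  exact lt_irrefl 0 h

end SubcritAux

namespace SubcritAux

lemma Rsol_scale {p ω : ℝ} (hp : 1 < p) (hω : 0 < ω) (x : ℝ) :
    Rsol p ω x = ω ^ (1/(p-1)) * Rsol p 1 (Real.sqrt ω * x) := by
  unfold Rsol
  rw [Real.sqrt_one]
  have h1 : (p+1) * ω / 2 = ω * ((p+1) * 1 / 2) := by ring
  rw [h1, Real.mul_rpow hω.le (by linarith)]
  have harg : (p-1) * Real.sqrt ω / 2 * x = (p-1) * 1 / 2 * (Real.sqrt ω * x) := by ring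
  rw [harg]
  ring

lemma Rsol_one_diff {p : ℝ} (hp : 1 < p) : Differentiable ℝ (Rsol p 1) := by
  have hcosh : Differentiable ℝ fun x : ℝ => Real.cosh ((p-1) * Real.sqrt 1 / 2 * x) :=
    Real.differentiable_cosh.comp (differentiable_id.const_mul _)
  intro x
  exact ((hcosh x).rpow_const (Or.inl (Real.cosh_pos _).ne')).const_mul _

lemma deriv_Rsol_scale {p ω : ℝ} (hp : 1 < p) (hω : 0 < ω) (x : ℝ) :
    deriv (Rsol p ω) x
      = ω ^ (1/(p-1)) * (Real.sqrt ω * deriv (Rsol p 1) (Real.sqrt ω * x)) := by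
  have h0 : Rsol p ω = fun t => ω ^ (1/(p-1)) * Rsol p 1 (Real.sqrt ω * t) :=
    funext fun t => Rsol_scale hp hω t
  rw [h0]
  have h1 : HasDerivAt (Rsol p 1) (deriv (Rsol p 1) (Real.sqrt ω * x)) (Real.sqrt ω * x) :=
    (Rsol_one_diff hp _).hasDerivAt
  have h2 : HasDerivAt (fun t : ℝ => Real.sqrt ω * t) (Real.sqrt ω) x := by
    simpa using (hasDerivAt_id x).const_mul (Real.sqrt ω)
  have h3 := (h1.comp x h2).const_mul (ω ^ (1/(p-1)))
  have h4 : deriv (fun t => ω ^ (1/(p-1)) * Rsol p 1 (Real.sqrt ω * t)) x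
      = ω ^ (1/(p-1)) * (deriv (Rsol p 1) (Real.sqrt ω * x) * Real.sqrt ω) := h3.deriv
  rw [h4]
  ring

lemma mR_scale {p ω : ℝ} (hp : 1 < p) (hω : 0 < ω) :
    mR p ω = ω ^ (2 * (1/(p-1)) + 1/2) * mR p 1 := by
  have hp1 : (0:ℝ) < p - 1 := by linarith
  have hne : p - 1 ≠ 0 := hp1.ne'
  have hs0 : 0 < Real.sqrt ω := Real.sqrt_pos.2 hω
  have hsq : Real.sqrt ω ^ 2 = ω := Real.sq_sqrt hω.le
  have hsqrt : Real.sqrt ω = ω ^ ((1:ℝ)/2) := Real.sqrt_eq_rpow ω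
  have hc1 : (ω ^ (1/(p-1)))^2 * ω * (Real.sqrt ω)⁻¹ = ω ^ (2 * (1/(p-1)) + 1/2) := by
    rw [hsqrt, ← Real.rpow_neg hω.le, sq, ← Real.rpow_add hω, ← Real.rpow_add_one hω.ne',
      ← Real.rpow_add hω]
    congr 1
    ring
  have hc2 : (ω ^ (1/(p-1))) ^ (p+1) * (Real.sqrt ω)⁻¹ = ω ^ (2 * (1/(p-1)) + 1/2) := by
    rw [hsqrt, ← Real.rpow_neg hω.le, ← Real.rpow_mul hω.le, ← Real.rpow_add hω]
    congr 1
    field_simp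
    ring
  have hint1 : (∫ x : ℝ, (deriv (Rsol p ω) x ^ 2 + ω * Rsol p ω x ^ 2))
      = ω ^ (2 * (1/(p-1)) + 1/2) * ∫ x : ℝ, (deriv (Rsol p 1) x ^ 2 + 1 * Rsol p 1 x ^ 2) := by
    have hpt : ∀ x : ℝ, deriv (Rsol p ω) x ^ 2 + ω * Rsol p ω x ^ 2
        = (ω ^ (1/(p-1)))^2 * ω *
          ((fun t => deriv (Rsol p 1) t ^ 2 + 1 * Rsol p 1 t ^ 2) (Real.sqrt ω * x)) := by
      intro x
      rw [deriv_Rsol_scale hp hω x, Rsol_scale hp hω x]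
      simp only []
      linear_combination ((ω ^ (1/(p-1)))^2 * deriv (Rsol p 1) (Real.sqrt ω * x) ^ 2) * hsq
    calc (∫ x : ℝ, (deriv (Rsol p ω) x ^ 2 + ω * Rsol p ω x ^ 2))
        = ∫ x : ℝ, (ω ^ (1/(p-1)))^2 * ω *
            ((fun t => deriv (Rsol p 1) t ^ 2 + 1 * Rsol p 1 t ^ 2) (Real.sqrt ω * x)) := by
          exact integral_congr_ae (Filter.Eventually.of_forall hpt)
      _ = (ω ^ (1/(p-1)))^2 * ω * ∫ x : ℝ,
            (fun t => deriv (Rsol p 1) t ^ 2 + 1 * Rsol p 1 t ^ 2) (Real.sqrt ω * x) := by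
          exact MeasureTheory.integral_const_mul _ _
      _ = (ω ^ (1/(p-1)))^2 * ω * (|(Real.sqrt ω)⁻¹| •
            ∫ t : ℝ, (deriv (Rsol p 1) t ^ 2 + 1 * Rsol p 1 t ^ 2)) := by
          rw [MeasureTheory.Measure.integral_comp_mul_left
            (fun t => deriv (Rsol p 1) t ^ 2 + 1 * Rsol p 1 t ^ 2) (Real.sqrt ω)]
      _ = ω ^ (2 * (1/(p-1)) + 1/2) * ∫ x : ℝ, (deriv (Rsol p 1) x ^ 2 + 1 * Rsol p 1 x ^ 2) := by
          rw [abs_of_pos (inv_pos.2 hs0), smul_eq_mul, ← hc1]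
          ring
  have hint2 : (∫ x : ℝ, |Rsol p ω x| ^ (p+1))
      = ω ^ (2 * (1/(p-1)) + 1/2) * ∫ x : ℝ, |Rsol p 1 x| ^ (p+1) := by
    have he0 : 0 < ω ^ (1/(p-1)) := Real.rpow_pos_of_pos hω _
    have hpt : ∀ x : ℝ, |Rsol p ω x| ^ (p+1)
        = (ω ^ (1/(p-1))) ^ (p+1) *
          ((fun t => |Rsol p 1 t| ^ (p+1)) (Real.sqrt ω * x)) := by
      intro x
      rw [Rsol_scale hp hω x, abs_mul, abs_of_pos he0,
        Real.mul_rpow he0.le (abs_nonneg _)]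
    calc (∫ x : ℝ, |Rsol p ω x| ^ (p+1))
        = ∫ x : ℝ, (ω ^ (1/(p-1))) ^ (p+1) *
            ((fun t => |Rsol p 1 t| ^ (p+1)) (Real.sqrt ω * x)) := by
          exact integral_congr_ae (Filter.Eventually.of_forall hpt)
      _ = (ω ^ (1/(p-1))) ^ (p+1) *
            ∫ x : ℝ, (fun t => |Rsol p 1 t| ^ (p+1)) (Real.sqrt ω * x) := MeasureTheory.integral_const_mul _ _
      _ = (ω ^ (1/(p-1))) ^ (p+1) * (|(Real.sqrt ω)⁻¹| •
            ∫ t : ℝ, |Rsol p 1 t| ^ (p+1)) := by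
          rw [MeasureTheory.Measure.integral_comp_mul_left (fun t => |Rsol p 1 t| ^ (p+1)) (Real.sqrt ω)]
      _ = ω ^ (2 * (1/(p-1)) + 1/2) * ∫ x : ℝ, |Rsol p 1 x| ^ (p+1) := by
          rw [abs_of_pos (inv_pos.2 hs0), smul_eq_mul, ← hc2]
          ring
  unfold mR SfunR
  rw [hint1, hint2]
  ring

end SubcritAux

namespace SubcritAux

set_option maxHeartbeats 1000000

lemma nehari_scale (p : ℝ) (hp : 1 < p) {ωa ωb : ℝ} (ha : 0 < ωa) (hb : 0 < ωb)
    {u : Cyl → ℂ} (hu : MemX u) (hne : ¬ u =ᵐ[volume] (0 : Cyl → ℂ))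
    (hN : Nfun p ωa u = 0) :
    ∃ v : Cyl → ℂ, MemX v ∧ ¬ v =ᵐ[volume] (0 : Cyl → ℂ) ∧ Nfun p ωb v = 0 ∧
      (ωa ≤ ωb → Sfun p ωb v ≤ (ωb / ωa) ^ (2 * (1/(p-1)) + 1/2) * Sfun p ωa u) := by
  have hp1 : (0:ℝ) < p - 1 := by linarith
  have hQ0 : 0 ≤ ∫ z : Cyl, ‖dX u z‖ ^ 2 := integral_nonneg fun z => by positivity
  have hD0 : 0 ≤ DyForm u := DyForm_nonneg u
  have hM0 : 0 < ∫ z : Cyl, ‖u z‖ ^ 2 := norm_sq_integral_pos hu.memL2 hne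
  set Q := ∫ z : Cyl, ‖dX u z‖ ^ 2 with hQdef
  set D := DyForm u with hDdef
  set M := ∫ z : Cyl, ‖u z‖ ^ 2 with hMdef
  set P := ∫ z : Cyl, ‖u z‖ ^ (p+1) with hPdef
  have hPQ : Q + D + ωa * M = P := by
    unfold Nfun at hN
    rw [← hQdef, ← hDdef, ← hMdef, ← hPdef] at hN
    linarith
  have hP0 : 0 < P := by nlinarith
  set A := ωb / ωa with hAdef
  have hA0 : 0 < A := div_pos hb ha
  set ν := Real.sqrt A with hνdef
  have hν0 : 0 < ν := Real.sqrt_pos.2 hA0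
  have hν2 : ν ^ 2 = A := Real.sq_sqrt hA0.le
  set X := (ν^2 * Q + D + ωb * M) / P with hXdef
  have hX0 : 0 < X := div_pos (by nlinarith) hP0
  set μ : ℝ := X ^ (1/(p-1)) with hμdef
  have hμ0 : 0 < μ := Real.rpow_pos_of_pos hX0 _
  have hμp : μ ^ (p - 1) = X := by
    rw [hμdef, ← Real.rpow_mul hX0.le, one_div, inv_mul_cancel₀ hp1.ne', Real.rpow_one]
  set v : Cyl → ℂ := fun z => ((μ : ℝ) : ℂ) * u (ν * z.1, z.2) with hvdef
  -- derivative formula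
  have hdX : ∀ z : Cyl, dX v z = ((μ * ν : ℝ) : ℂ) * dX u (ν * z.1, z.2) := by
    intro z
    have h1 : HasDerivAt (fun t => u (t, z.2)) (dX u (ν * z.1, z.2)) (ν * z.1) :=
      (hu.diffX z.2 (ν * z.1)).hasDerivAt
    have h2 : HasDerivAt (fun t : ℝ => ν * t) ν z.1 := by
      simpa using (hasDerivAt_id z.1).const_mul ν
    have h3 : HasDerivAt (fun t => u (ν * t, z.2)) (ν • dX u (ν * z.1, z.2)) z.1 :=
      h1.scomp z.1 h2
    have h4 := h3.const_mul ((μ : ℝ) : ℂ)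
    have h5 : dX v z = deriv (fun t => ((μ:ℝ):ℂ) * u (ν * t, z.2)) z.1 := rfl
    rw [h5, h4.deriv, Complex.real_smul]
    push_cast
    ring
  -- component computations
  have hQv : (∫ z : Cyl, ‖dX v z‖ ^ 2) = μ^2 * ν * Q := by
    have hpt : ∀ z : Cyl, ‖dX v z‖ ^ 2
        = (μ * ν)^2 * ((fun w => ‖dX u w‖ ^ 2) (ν * z.1, z.2)) := by
      intro z
      rw [hdX z, norm_mul, Complex.norm_real, Real.norm_eq_abs,
        abs_of_pos (mul_pos hμ0 hν0), mul_pow]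
    calc (∫ z : Cyl, ‖dX v z‖ ^ 2)
        = ∫ z : Cyl, (μ * ν)^2 * ((fun w => ‖dX u w‖ ^ 2) (ν * z.1, z.2)) :=
          integral_congr_ae (Filter.Eventually.of_forall hpt)
      _ = (μ * ν)^2 * ∫ z : Cyl, (fun w => ‖dX u w‖ ^ 2) (ν * z.1, z.2) :=
          MeasureTheory.integral_const_mul _ _
      _ = (μ * ν)^2 * (ν⁻¹ • ∫ z : Cyl, ‖dX u z‖ ^ 2) := by
          rw [integral_dil hν0 (fun w => ‖dX u w‖ ^ 2)]
      _ = μ^2 * ν * Q := by rw [smul_eq_mul, ← hQdef]; field_simp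
  have hMv : (∫ z : Cyl, ‖v z‖ ^ 2) = μ^2 * ν⁻¹ * M := by
    have hpt : ∀ z : Cyl, ‖v z‖ ^ 2
        = μ^2 * ((fun w => ‖u w‖ ^ 2) (ν * z.1, z.2)) := by
      intro z
      rw [hvdef]
      simp only []
      rw [norm_mul, Complex.norm_real, Real.norm_eq_abs, abs_of_pos hμ0, mul_pow]
    calc (∫ z : Cyl, ‖v z‖ ^ 2)
        = ∫ z : Cyl, μ^2 * ((fun w => ‖u w‖ ^ 2) (ν * z.1, z.2)) :=
          integral_congr_ae (Filter.Eventually.of_forall hpt)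
      _ = μ^2 * ∫ z : Cyl, (fun w => ‖u w‖ ^ 2) (ν * z.1, z.2) :=
          MeasureTheory.integral_const_mul _ _
      _ = μ^2 * (ν⁻¹ • ∫ z : Cyl, ‖u z‖ ^ 2) := by
          rw [integral_dil hν0 (fun w => ‖u w‖ ^ 2)]
      _ = μ^2 * ν⁻¹ * M := by rw [smul_eq_mul, ← hMdef]; ring
  have hPv : (∫ z : Cyl, ‖v z‖ ^ (p+1)) = μ ^ (p+1) * ν⁻¹ * P := by
    have hpt : ∀ z : Cyl, ‖v z‖ ^ (p+1)
        = μ ^ (p+1) * ((fun w => ‖u w‖ ^ (p+1)) (ν * z.1, z.2)) := by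
      intro z
      rw [hvdef]
      simp only []
      rw [norm_mul, Complex.norm_real, Real.norm_eq_abs, abs_of_pos hμ0,
        Real.mul_rpow hμ0.le (norm_nonneg _)]
    calc (∫ z : Cyl, ‖v z‖ ^ (p+1))
        = ∫ z : Cyl, μ ^ (p+1) * ((fun w => ‖u w‖ ^ (p+1)) (ν * z.1, z.2)) :=
          integral_congr_ae (Filter.Eventually.of_forall hpt)
      _ = μ ^ (p+1) * ∫ z : Cyl, (fun w => ‖u w‖ ^ (p+1)) (ν * z.1, z.2) :=
          MeasureTheory.integral_const_mul _ _
      _ = μ ^ (p+1) * (ν⁻¹ • ∫ z : Cyl, ‖u z‖ ^ (p+1)) := by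
          rw [integral_dil hν0 (fun w => ‖u w‖ ^ (p+1))]
      _ = μ ^ (p+1) * ν⁻¹ * P := by rw [smul_eq_mul, ← hPdef]; ring
  -- Fourier coefficients
  have hfc : ∀ (n : ℤ) (x : ℝ), fCoef v n x = ((μ:ℝ):ℂ) * fCoef u n (ν * x) := by
    intro n x
    exact fourierCoeff.const_mul (fun y => u (ν * x, y)) _ n
  have hIn : ∀ n : ℤ, (∫ x : ℝ, ‖fCoef v n x‖ ^ 2)
      = μ^2 * ν⁻¹ * ∫ x : ℝ, ‖fCoef u n x‖ ^ 2 := by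
    intro n
    have hpt : ∀ x : ℝ, ‖fCoef v n x‖ ^ 2
        = μ^2 * ((fun t => ‖fCoef u n t‖ ^ 2) (ν * x)) := by
      intro x
      rw [hfc n x, norm_mul, Complex.norm_real, Real.norm_eq_abs, abs_of_pos hμ0, mul_pow]
    calc (∫ x : ℝ, ‖fCoef v n x‖ ^ 2)
        = ∫ x : ℝ, μ^2 * ((fun t => ‖fCoef u n t‖ ^ 2) (ν * x)) :=
          integral_congr_ae (Filter.Eventually.of_forall hpt)
      _ = μ^2 * ∫ x : ℝ, (fun t => ‖fCoef u n t‖ ^ 2) (ν * x) :=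
          MeasureTheory.integral_const_mul _ _
      _ = μ^2 * (|ν⁻¹| • ∫ t : ℝ, ‖fCoef u n t‖ ^ 2) := by
          rw [MeasureTheory.Measure.integral_comp_mul_left (fun t => ‖fCoef u n t‖ ^ 2) ν]
      _ = μ^2 * ν⁻¹ * ∫ x : ℝ, ‖fCoef u n x‖ ^ 2 := by
          rw [abs_of_pos (inv_pos.2 hν0), smul_eq_mul]; ring
  have hDv : DyForm v = μ^2 * ν⁻¹ * D := by
    unfold DyForm
    calc (2 * Real.pi) * ∑' n : ℤ, (|n| : ℝ) * ∫ x : ℝ, ‖fCoef v n x‖ ^ 2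
        = (2 * Real.pi) * ∑' n : ℤ, (μ^2 * ν⁻¹) * ((|n| : ℝ) * ∫ x : ℝ, ‖fCoef u n x‖ ^ 2) := by
          congr 1
          exact tsum_congr fun n => by rw [hIn n]; ring
      _ = μ^2 * ν⁻¹ * ((2 * Real.pi) * ∑' n : ℤ, (|n| : ℝ) * ∫ x : ℝ, ‖fCoef u n x‖ ^ 2) := by
          rw [tsum_mul_left]; ring
      _ = μ^2 * ν⁻¹ * D := by rw [hDdef]; rfl
  have hsumv : Summable fun n : ℤ => (|n| : ℝ) * ∫ x : ℝ, ‖fCoef v n x‖ ^ 2 := by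
    refine (hu.dy_summable.mul_left (μ^2 * ν⁻¹)).congr fun n => ?_
    rw [hIn n]; ring
  -- MemX
  have hmemv : MemX v := by
    constructor
    · exact (memLp_dil hν0 2 u hu.memL2).const_mul _
    · intro y
      have h1 : Differentiable ℝ fun t => u (ν * t, y) :=
        (hu.diffX y).comp (differentiable_id.const_mul ν)
      exact h1.const_mul _
    · have h2 : dX v = fun z => ((μ * ν : ℝ) : ℂ) * dX u (ν * z.1, z.2) := funext hdX
      rw [h2]
      exact (memLp_dil hν0 2 (dX u) hu.dX_memL2).const_mul _
    · exact hsumv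
  have hnev : ¬ v =ᵐ[volume] (0 : Cyl → ℂ) := by
    apply ne_zero_of_integral_pos
    rw [hMv]
    exact mul_pos (mul_pos (pow_pos hμ0 2) (inv_pos.2 hν0)) hM0
  have hXP : μ ^ (p-1) * P = ν^2 * Q + D + ωb * M := by
    rw [hμp, hXdef]
    field_simp
  have hμpp : μ ^ (p+1) = μ^2 * μ^(p-1) := by
    have h2 : μ ^ (p+1) = μ ^ ((2:ℝ) + (p-1)) := by
      rw [show (2:ℝ) + (p-1) = p + 1 from by ring]
    rw [h2, Real.rpow_add hμ0, show ((2:ℝ)) = ((2:ℕ):ℝ) from by norm_num, Real.rpow_natCast]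
  have hNb : Nfun p ωb v = 0 := by
    unfold Nfun
    rw [hQv, hDv, hMv, hPv, hμpp]
    have hνinv : ν * ν⁻¹ = 1 := mul_inv_cancel₀ hν0.ne'
    linear_combination (-(μ^2 * ν⁻¹)) * hXP - (μ^2 * Q * ν) * hνinv
  refine ⟨v, hmemv, hnev, hNb, fun hab => ?_⟩
  -- the action bound
  have hA1 : 1 ≤ A := (one_le_div ha).2 hab
  have hXA : X ≤ A := by
    rw [hXdef, div_le_iff₀ hP0]
    have h1 : ν^2 * Q = A * Q := by rw [hν2]
    have h2 : D ≤ A * D := le_mul_of_one_le_left hD0 hA1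
    have h3 : ωb * M = A * (ωa * M) := by
      rw [hAdef]; field_simp
    nlinarith [hPQ]
  have hμA : μ ^ (p+1) ≤ A ^ ((p+1)/(p-1)) := by
    have h1 : μ ^ (p+1) = X ^ ((1/(p-1)) * (p+1)) := by
      rw [hμdef, ← Real.rpow_mul hX0.le]
    have h2 : (1/(p-1)) * (p+1) = (p+1)/(p-1) := by ring
    rw [h1, h2]
    exact Real.rpow_le_rpow hX0.le hXA (by positivity)
  have hνA : ν⁻¹ = A ^ (-(1/2) : ℝ) := by
    rw [hνdef, Real.sqrt_eq_rpow, ← Real.rpow_neg hA0.le]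
  have hκ : 0 ≤ 1/2 - 1/(p+1) := kappa_nonneg hp
  have hSv : Sfun p ωb v = (1/2 - 1/(p+1)) * (μ ^ (p+1) * ν⁻¹ * P) := by
    rw [Sfun_eq_Nfun, hNb, hPv]
    ring
  have hSu : Sfun p ωa u = (1/2 - 1/(p+1)) * P := by
    rw [Sfun_eq_Nfun, hN, ← hPdef]
    ring
  have hexp : (p+1)/(p-1) + -(1/2 : ℝ) = 2 * (1/(p-1)) + 1/2 := by
    field_simp
    ring
  calc Sfun p ωb v = (1/2 - 1/(p+1)) * (μ ^ (p+1) * ν⁻¹ * P) := hSv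
    _ ≤ (1/2 - 1/(p+1)) * (A ^ ((p+1)/(p-1)) * ν⁻¹ * P) := by
        apply mul_le_mul_of_nonneg_left ?_ hκ
        apply mul_le_mul_of_nonneg_right ?_ hP0.le
        exact mul_le_mul_of_nonneg_right hμA (inv_pos.2 hν0).le
    _ = A ^ (2 * (1/(p-1)) + 1/2) * ((1/2 - 1/(p+1)) * P) := by
        rw [hνA, ← hexp, Real.rpow_add hA0]
        ring
    _ = A ^ (2 * (1/(p-1)) + 1/2) * Sfun p ωa u := by rw [hSu]

end SubcritAux

namespace SubcritAux

lemma mval_lb (p ω : ℝ) (hp : 1 < p) :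
    ∀ s ∈ Sfun p ω '' {u : Cyl → ℂ | MemX u ∧ ¬ u =ᵐ[volume] (0 : Cyl → ℂ) ∧ Nfun p ω u = 0},
      (0:ℝ) ≤ s := by
  rintro s ⟨u, ⟨hu, hne, hN⟩, rfl⟩
  rw [Sfun_eq_Nfun, hN]
  have hP : 0 ≤ ∫ z : Cyl, ‖u z‖ ^ (p+1) := integral_nonneg fun z => by positivity
  have hκ := kappa_nonneg hp
  nlinarith

end SubcritAux

/-- if `m_{ω₀} < 2π·m_{ω₀,ℝ}` for some `ω₀ > 0`, then
`m_ω < 2π·m_{ω,ℝ}` for every `ω > ω₀`. -/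
theorem subcritical_action_monotone (p : ℝ) (hp : 1 < p) (hp5 : p < 5)
    (ω₀ : ℝ) (hω₀ : 0 < ω₀) (h : mval p ω₀ < 2 * Real.pi * mR p ω₀) :
    ∀ ω : ℝ, ω₀ < ω → mval p ω < 2 * Real.pi * mR p ω := by
  intro ω hωgt
  have hωpos : 0 < ω := lt_trans hω₀ hωgt
  have hp1 : (0:ℝ) < p - 1 := by linarith
  have hA0 : 0 < ω / ω₀ := div_pos hωpos hω₀
  have hmRs : mR p ω = (ω/ω₀) ^ (2*(1/(p-1)) + 1/2) * mR p ω₀ := by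
    rw [SubcritAux.mR_scale hp hωpos, SubcritAux.mR_scale hp hω₀, ← mul_assoc,
      ← Real.mul_rpow hA0.le hω₀.le, div_mul_cancel₀ _ hω₀.ne']
  by_cases hne :
      ({u : Cyl → ℂ | MemX u ∧ ¬ u =ᵐ[volume] (0 : Cyl → ℂ) ∧ Nfun p ω₀ u = 0}).Nonempty
  · have hh : sInf (Sfun p ω₀ ''
        {u : Cyl → ℂ | MemX u ∧ ¬ u =ᵐ[volume] (0 : Cyl → ℂ) ∧ Nfun p ω₀ u = 0})
        < 2 * Real.pi * mR p ω₀ := h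
    obtain ⟨s, hs, hlt⟩ := exists_lt_of_csInf_lt (hne.image _) hh
    obtain ⟨u, huS, hsu⟩ := hs
    obtain ⟨v, hv1, hv2, hv3, hv4⟩ :=
      SubcritAux.nehari_scale p hp hω₀ hωpos huS.1 huS.2.1 huS.2.2
    have h1 : mval p ω ≤ Sfun p ω v := by
      apply csInf_le ⟨0, fun t ht => SubcritAux.mval_lb p ω hp t ht⟩
      exact ⟨v, ⟨hv1, hv2, hv3⟩, rfl⟩
    have h2 := hv4 hωgt.le
    have h3 : (ω/ω₀) ^ (2*(1/(p-1)) + 1/2) * Sfun p ω₀ u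
        < (ω/ω₀) ^ (2*(1/(p-1)) + 1/2) * (2 * Real.pi * mR p ω₀) := by
      apply mul_lt_mul_of_pos_left ?_ (Real.rpow_pos_of_pos hA0 _)
      rw [hsu]; exact hlt
    rw [hmRs]
    calc mval p ω ≤ Sfun p ω v := h1
      _ ≤ (ω/ω₀) ^ (2*(1/(p-1)) + 1/2) * Sfun p ω₀ u := h2
      _ < (ω/ω₀) ^ (2*(1/(p-1)) + 1/2) * (2 * Real.pi * mR p ω₀) := h3
      _ = 2 * Real.pi * ((ω/ω₀) ^ (2*(1/(p-1)) + 1/2) * mR p ω₀) := by ring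
  · have hmv0 : mval p ω₀ = 0 := by
      unfold mval
      rw [Set.not_nonempty_iff_eq_empty.1 hne, Set.image_empty, Real.sInf_empty]
    have hmR0 : 0 < mR p ω₀ := by
      rw [hmv0] at h
      nlinarith [Real.pi_pos]
    have hempty :
        ¬ ({u : Cyl → ℂ | MemX u ∧ ¬ u =ᵐ[volume] (0 : Cyl → ℂ) ∧ Nfun p ω u = 0}).Nonempty := by
      rintro ⟨w, hw1, hw2, hw3⟩
      obtain ⟨v, hv1, hv2, hv3, -⟩ := SubcritAux.nehari_scale p hp hωpos hω₀ hw1 hw2 hw3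
      exact hne ⟨v, hv1, hv2, hv3⟩
    have hmv : mval p ω = 0 := by
      unfold mval
      rw [Set.not_nonempty_iff_eq_empty.1 hempty, Set.image_empty, Real.sInf_empty]
    rw [hmv, hmRs]
    have hpow : 0 < (ω/ω₀) ^ (2*(1/(p-1)) + 1/2) := Real.rpow_pos_of_pos hA0 _
    nlinarith [Real.pi_pos]
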